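/- Covariance intersection preserves consistency: if (X̂₀, C₀) and (X̂₁, C₁) are consistent estimators of a random variable X (i.e., Cᵢ - cov[X - X̂ᵢ] is positive semidefinite for i = 0,1), and s ∈ [0,1] with (1-s)C₀⁻¹ + sC₁⁻¹ invertible, then the fused estimator (X̂ₐ, Cₐ) with Cₐ⁻¹ = (1-s)C₀⁻¹ + sC₁⁻¹ and X̂ₐ = Cₐ((1-s)C₀⁻¹X̂₀ + sC₁⁻¹X̂₁) is also consistent: Cₐ - cov[X - X̂ₐ] is positive semidefinite. -/

import Mathlib

open MeasureTheory

/-- Covariance matrix of a random vector `Y : Ω → Fin n → ℝ`: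
`cov[Y] = E[Y Yᵀ] - E[Y] E[Y]ᵀ`. -/
noncomputable def covMatrix {Ω : Type*} [MeasurableSpace Ω] (μ : Measure Ω)
    {n : ℕ} (Y : Ω → Fin n → ℝ) : Matrix (Fin n) (Fin n) ℝ :=
  Matrix.of fun i j =>
    (∫ ω, Y ω i * Y ω j ∂μ) - (∫ ω, Y ω i ∂μ) * (∫ ω, Y ω j ∂μ)

section Aux
open Matrix

variable {Ω : Type*} [MeasurableSpace Ω] {μ : Measure Ω}

/-- Product of two L² functions is integrable. -/
lemma myIntMul {f g : Ω → ℝ}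
    (hf : MemLp f 2 μ) (hg : MemLp g 2 μ) : Integrable (fun ω => f ω * g ω) μ := by
  have h1 := (hf.add hg).integrable_sq
  have h2 := hf.integrable_sq
  have h3 := hg.integrable_sq
  have h4 := ((h1.sub h2).sub h3).div_const 2
  refine h4.congr (Filter.Eventually.of_forall fun ω => ?_)
  simp only [Pi.sub_apply, Pi.add_apply]
  ring

lemma intComb {f g : Ω → ℝ}
    (hf : MemLp f 2 μ) (hg : MemLp g 2 μ) (c1 c2 c3 : ℝ) :
    ∫ ω, (c1 * (f ω * f ω) + c2 * (f ω * g ω) + c3 * (g ω * g ω)) ∂μ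
      = c1 * (∫ ω, f ω * f ω ∂μ) + c2 * (∫ ω, f ω * g ω ∂μ) + c3 * (∫ ω, g ω * g ω ∂μ) := by
  have hA : Integrable (fun ω => c1 * (f ω * f ω)) μ := (myIntMul hf hf).const_mul c1
  have hB : Integrable (fun ω => c2 * (f ω * g ω)) μ := (myIntMul hf hg).const_mul c2
  have hC : Integrable (fun ω => c3 * (g ω * g ω)) μ := (myIntMul hg hg).const_mul c3
  have hAB : Integrable (fun ω => c1 * (f ω * f ω) + c2 * (f ω * g ω)) μ := hA.add hB
  rw [MeasureTheory.integral_add hAB hC, MeasureTheory.integral_add hA hB, integral_const_mul,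
    integral_const_mul, integral_const_mul]

lemma intComb1 [IsProbabilityMeasure μ]
    {f g : Ω → ℝ} (hf : MemLp f 2 μ) (hg : MemLp g 2 μ) (a b : ℝ) :
    ∫ ω, (a * f ω + b * g ω) ∂μ = a * (∫ ω, f ω ∂μ) + b * (∫ ω, g ω ∂μ) := by
  have hA : Integrable (fun ω => a * f ω) μ := (hf.integrable one_le_two).const_mul a
  have hB : Integrable (fun ω => b * g ω) μ := (hg.integrable one_le_two).const_mul b
  rw [MeasureTheory.integral_add hA hB, integral_const_mul, integral_const_mul]

/-- Scalar "variance" functional. -/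
noncomputable def Vr (μ : Measure Ω) (f : Ω → ℝ) : ℝ :=
  (∫ ω, f ω * f ω ∂μ) - (∫ ω, f ω ∂μ) * (∫ ω, f ω ∂μ)

lemma Vr_nonneg [IsProbabilityMeasure μ]
    {f : Ω → ℝ} (hf : MemLp f 2 μ) : 0 ≤ Vr μ f := by
  set c := ∫ ω, f ω ∂μ with hc
  have hg : MemLp (fun _ : Ω => c) 2 μ := memLp_const c
  have h0 : 0 ≤ ∫ ω, ((1:ℝ) * (f ω * f ω) + (-2) * (f ω * c) + 1 * (c * c)) ∂μ := by
    refine integral_nonneg fun ω => ?_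
    have : (1:ℝ) * (f ω * f ω) + (-2) * (f ω * c) + 1 * (c * c) = (f ω - c) * (f ω - c) := by ring
    rw [this]; exact mul_self_nonneg _
  rw [intComb hf hg 1 (-2) 1] at h0
  have e1 : ∫ ω, f ω * c ∂μ = c * c := by rw [integral_mul_const, ← hc]
  have e2 : ∫ _ : Ω, c * c ∂μ = c * c := by simp
  rw [e1, e2] at h0
  simp only [Vr, ← hc]
  nlinarith [h0]

lemma Vr_convex [IsProbabilityMeasure μ]
    {f g : Ω → ℝ} (hf : MemLp f 2 μ) (hg : MemLp g 2 μ)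
    {a b : ℝ} (ha : 0 ≤ a) (hb : 0 ≤ b) (hab : a + b = 1) :
    Vr μ (fun ω => a * f ω + b * g ω) ≤ a * Vr μ f + b * Vr μ g := by
  have hVcomb : ∀ (p q : ℝ), Vr μ (fun ω => p * f ω + q * g ω)
      = p*p*(∫ ω, f ω * f ω ∂μ) + (2*p*q)*(∫ ω, f ω * g ω ∂μ) + q*q*(∫ ω, g ω * g ω ∂μ)
        - (p * (∫ ω, f ω ∂μ) + q * (∫ ω, g ω ∂μ)) * (p * (∫ ω, f ω ∂μ) + q * (∫ ω, g ω ∂μ)) := by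
    intro p q
    have h1 : ∀ ω, (p * f ω + q * g ω) * (p * f ω + q * g ω)
        = (p*p) * (f ω * f ω) + (2*p*q) * (f ω * g ω) + (q*q) * (g ω * g ω) := fun ω => by ring
    simp only [Vr]
    simp_rw [h1]
    rw [intComb hf hg, intComb1 hf hg]
  have key : 0 ≤ Vr μ (fun ω => (1:ℝ) * f ω + (-1) * g ω) := by
    exact Vr_nonneg ((hf.const_mul 1).add (hg.const_mul (-1)))
  rw [hVcomb 1 (-1)] at key
  rw [hVcomb a b]
  have hb' : b = 1 - a := by linarith
  subst hb'
  simp only [Vr]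
  nlinarith [mul_nonneg (mul_nonneg ha hb) key]

/-- A linear functional of an L² random vector is L². -/
lemma memLp_dot {n : ℕ} {Z : Ω → Fin n → ℝ}
    (hZ : ∀ i, MemLp (fun ω => Z ω i) 2 μ) (v : Fin n → ℝ) :
    MemLp (fun ω => v ⬝ᵥ Z ω) 2 μ := by
  simp only [dotProduct]
  exact memLp_finset_sum _ (fun i _ => (hZ i).const_mul (v i))

/-- Quadratic form of the covariance matrix is the variance of the corresponding
linear functional. -/
lemma covQuad [IsProbabilityMeasure μ] {n : ℕ}
    {Y : Ω → Fin n → ℝ} (hY : ∀ i, MemLp (fun ω => Y ω i) 2 μ) (x : Fin n → ℝ) :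
    x ⬝ᵥ (covMatrix μ Y).mulVec x = Vr μ (fun ω => x ⬝ᵥ Y ω) := by
  have hI : ∀ i : Fin n, Integrable (fun ω => Y ω i) μ := fun i => (hY i).integrable one_le_two
  have h1 : (∫ ω, x ⬝ᵥ Y ω ∂μ) = ∑ i, x i * ∫ ω, Y ω i ∂μ := by
    simp only [dotProduct]
    rw [integral_finset_sum _ (fun i _ => (hI i).const_mul (x i))]
    simp_rw [integral_const_mul]
  have h2 : (∫ ω, (x ⬝ᵥ Y ω) * (x ⬝ᵥ Y ω) ∂μ)
      = ∑ i, ∑ j, x i * x j * ∫ ω, Y ω i * Y ω j ∂μ := by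
    have hpt : ∀ ω, (x ⬝ᵥ Y ω) * (x ⬝ᵥ Y ω) = ∑ i, ∑ j, x i * x j * (Y ω i * Y ω j) := by
      intro ω
      rw [dotProduct, Finset.sum_mul_sum]
      exact Finset.sum_congr rfl fun i _ => Finset.sum_congr rfl fun j _ => by ring
    simp_rw [hpt]
    rw [integral_finset_sum _ (fun i _ => integrable_finset_sum _
      (fun j _ => ((myIntMul (hY i) (hY j)).const_mul _)))]
    refine Finset.sum_congr rfl fun i _ => ?_
    rw [integral_finset_sum _ (fun j _ => ((myIntMul (hY i) (hY j)).const_mul _))]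
    exact Finset.sum_congr rfl fun j _ => integral_const_mul _ _
  simp only [Vr]
  rw [h2, h1, Finset.sum_mul_sum]
  simp only [covMatrix, Matrix.mulVec, dotProduct, Matrix.of_apply]
  rw [← Finset.sum_sub_distrib]
  refine Finset.sum_congr rfl fun i _ => ?_
  rw [Finset.mul_sum, ← Finset.sum_sub_distrib]
  refine Finset.sum_congr rfl fun j _ => ?_
  ring

/-- The covariance matrix is symmetric. -/
lemma covMatrix_transpose {n : ℕ} (Y : Ω → Fin n → ℝ) :
    (covMatrix μ Y)ᵀ = covMatrix μ Y := by
  ext i j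
  simp only [covMatrix, Matrix.transpose_apply, Matrix.of_apply]
  rw [mul_comm (∫ ω, Y ω j ∂μ)]
  congr 1
  simp_rw [mul_comm (Y _ j)]

/-- Quadratic-form change of variables. -/
lemma dot_mulVec_mulVec {n : ℕ} (A B : Matrix (Fin n) (Fin n) ℝ) (x : Fin n → ℝ) :
    (A.mulVec x) ⬝ᵥ (B.mulVec x) = x ⬝ᵥ ((Aᵀ * B).mulVec x) := by
  rw [Matrix.dotProduct_mulVec, Matrix.vecMul_mulVec, ← Matrix.dotProduct_mulVec]

end Aux
open Matrix

/-- Covariance intersection preserves consistency: if `(X̂₀, C₀)` and `(X̂₁, C₁)`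
are consistent estimators of `X` and `s ∈ [0,1]` with `(1-s)C₀⁻¹ + sC₁⁻¹`
invertible, then the CI-fused estimator `(X̂ₐ, Cₐ)` is consistent. -/
theorem covariance_intersection_consistent
    {Ω : Type*} [MeasurableSpace Ω] (μ : Measure Ω) [IsProbabilityMeasure μ]
    {n : ℕ} (X X0 X1 : Ω → Fin n → ℝ)
    (C0 C1 : Matrix (Fin n) (Fin n) ℝ)
    (hC0 : C0.PosDef) (hC1 : C1.PosDef)
    (hL2_0 : ∀ i, MemLp (fun ω => X ω i - X0 ω i) 2 μ)
    (hL2_1 : ∀ i, MemLp (fun ω => X ω i - X1 ω i) 2 μ)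
    (hcons0 : (C0 - covMatrix μ (fun ω => X ω - X0 ω)).PosSemidef)
    (hcons1 : (C1 - covMatrix μ (fun ω => X ω - X1 ω)).PosSemidef)
    (s : ℝ) (hs : s ∈ Set.Icc (0 : ℝ) 1)
    (hinv : IsUnit ((1 - s) • C0⁻¹ + s • C1⁻¹).det)
    (Ca : Matrix (Fin n) (Fin n) ℝ)
    (hCa : Ca = ((1 - s) • C0⁻¹ + s • C1⁻¹)⁻¹)
    (Xa : Ω → Fin n → ℝ)
    (hXa : ∀ ω, Xa ω =
      Ca.mulVec ((1 - s) • C0⁻¹.mulVec (X0 ω) + s • C1⁻¹.mulVec (X1 ω))) :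
    (Ca - covMatrix μ (fun ω => X ω - Xa ω)).PosSemidef := by
  obtain ⟨hs0, hs1⟩ := hs
  have hs1' : (0:ℝ) ≤ 1 - s := by linarith
  set S : Matrix (Fin n) (Fin n) ℝ := (1 - s) • C0⁻¹ + s • C1⁻¹ with hS
  -- basic matrix facts
  have hCaS : Ca * S = 1 := by rw [hCa]; exact S.nonsing_inv_mul hinv
  have hSCa : S * Ca = 1 := by rw [hCa]; exact S.mul_nonsing_inv hinv
  have hC0T : C0ᵀ = C0 := by
    rw [← Matrix.conjTranspose_eq_transpose_of_trivial]; exact hC0.1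
  have hC1T : C1ᵀ = C1 := by
    rw [← Matrix.conjTranspose_eq_transpose_of_trivial]; exact hC1.1
  have hC0iT : (C0⁻¹)ᵀ = C0⁻¹ := by rw [Matrix.transpose_nonsing_inv, hC0T]
  have hC1iT : (C1⁻¹)ᵀ = C1⁻¹ := by rw [Matrix.transpose_nonsing_inv, hC1T]
  have hST : Sᵀ = S := by
    rw [hS, Matrix.transpose_add, Matrix.transpose_smul, Matrix.transpose_smul, hC0iT, hC1iT]
  have hCaT : Caᵀ = Ca := by rw [hCa, Matrix.transpose_nonsing_inv, hST]
  -- pointwise identity for the fused error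
  have hkey : ∀ ω, X ω - Xa ω
      = Ca.mulVec ((1 - s) • C0⁻¹.mulVec (X ω - X0 ω) + s • C1⁻¹.mulVec (X ω - X1 ω)) := by
    intro ω
    have hX : X ω = Ca.mulVec (S.mulVec (X ω)) := by
      rw [Matrix.mulVec_mulVec, hCaS, Matrix.one_mulVec]
    have inner : S.mulVec (X ω) - ((1 - s) • C0⁻¹.mulVec (X0 ω) + s • C1⁻¹.mulVec (X1 ω))
        = (1 - s) • C0⁻¹.mulVec (X ω - X0 ω) + s • C1⁻¹.mulVec (X ω - X1 ω) := by
      simp only [hS, Matrix.add_mulVec, Matrix.smul_mulVec, Matrix.mulVec_sub, smul_sub]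
      abel
    conv_lhs => rw [hX, hXa ω]
    rw [← Matrix.mulVec_sub, inner]
  -- L² of components
  have hw : ∀ j, MemLp (fun ω =>
      ((1 - s) • C0⁻¹.mulVec (X ω - X0 ω) + s • C1⁻¹.mulVec (X ω - X1 ω)) j) 2 μ := by
    intro j
    have h0 : MemLp (fun ω => (C0⁻¹ j) ⬝ᵥ (X ω - X0 ω)) 2 μ :=
      memLp_dot (fun i => hL2_0 i) (C0⁻¹ j)
    have h1 : MemLp (fun ω => (C1⁻¹ j) ⬝ᵥ (X ω - X1 ω)) 2 μ :=
      memLp_dot (fun i => hL2_1 i) (C1⁻¹ j)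
    exact (h0.const_mul (1 - s)).add (h1.const_mul s)
  have heA : ∀ i, MemLp (fun ω => X ω i - Xa ω i) 2 μ := by
    intro i
    have heq : (fun ω => X ω i - Xa ω i) = fun ω =>
        (Ca i) ⬝ᵥ (((1 - s) • C0⁻¹.mulVec (X ω - X0 ω) + s • C1⁻¹.mulVec (X ω - X1 ω))) := by
      funext ω
      have := congrFun (hkey ω) i
      simpa [Matrix.mulVec, Pi.sub_apply] using this
    rw [heq]
    exact memLp_dot hw (Ca i)
  -- symmetry part
  refine Matrix.PosSemidef.of_dotProduct_mulVec_nonneg ?_ fun x => ?_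
  · show (Ca - covMatrix μ (fun ω => X ω - Xa ω))ᴴ = _
    rw [Matrix.conjTranspose_eq_transpose_of_trivial, Matrix.transpose_sub, hCaT,
      covMatrix_transpose]
  · -- quadratic form part
    have hstar : star x = x := by simp
    rw [hstar, Matrix.sub_mulVec, dotProduct_sub, sub_nonneg]
    -- abbreviations
    set z : Fin n → ℝ := Ca.mulVec x with hz
    set y0 : Fin n → ℝ := C0⁻¹.mulVec z with hy0
    set y1 : Fin n → ℝ := C1⁻¹.mulVec z with hy1
    have hf : MemLp (fun ω => y0 ⬝ᵥ (X ω - X0 ω)) 2 μ := memLp_dot (fun i => hL2_0 i) y0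
    have hg : MemLp (fun ω => y1 ⬝ᵥ (X ω - X1 ω)) 2 μ := memLp_dot (fun i => hL2_1 i) y1
    -- the fused error as scalar combination
    have hptw : ∀ ω, x ⬝ᵥ (X ω - Xa ω)
        = (1 - s) * (y0 ⬝ᵥ (X ω - X0 ω)) + s * (y1 ⬝ᵥ (X ω - X1 ω)) := by
      intro ω
      rw [hkey ω, Matrix.dotProduct_mulVec]
      have hxCa : x ᵥ* Ca = z := by
        rw [hz]; conv_lhs => rw [← hCaT]
        rw [Matrix.vecMul_transpose]
      rw [hxCa, dotProduct_add, dotProduct_smul, dotProduct_smul,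
        Matrix.dotProduct_mulVec, Matrix.dotProduct_mulVec]
      have h0 : z ᵥ* C0⁻¹ = y0 := by
        rw [hy0]; conv_lhs => rw [← hC0iT]
        rw [Matrix.vecMul_transpose]
      have h1 : z ᵥ* C1⁻¹ = y1 := by
        rw [hy1]; conv_lhs => rw [← hC1iT]
        rw [Matrix.vecMul_transpose]
      rw [h0, h1, smul_eq_mul, smul_eq_mul]
    -- variance bound via consistency
    have hbound0 : Vr μ (fun ω => y0 ⬝ᵥ (X ω - X0 ω)) ≤ y0 ⬝ᵥ C0.mulVec y0 := by
      have h := hcons0.dotProduct_mulVec_nonneg y0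
      have hstar0 : star y0 = y0 := by simp
      rw [hstar0, Matrix.sub_mulVec, dotProduct_sub, sub_nonneg] at h
      calc Vr μ (fun ω => y0 ⬝ᵥ (X ω - X0 ω))
          = y0 ⬝ᵥ (covMatrix μ (fun ω => X ω - X0 ω)).mulVec y0 :=
            (covQuad (fun i => hL2_0 i) y0).symm
        _ ≤ y0 ⬝ᵥ C0.mulVec y0 := h
    have hbound1 : Vr μ (fun ω => y1 ⬝ᵥ (X ω - X1 ω)) ≤ y1 ⬝ᵥ C1.mulVec y1 := by
      have h := hcons1.dotProduct_mulVec_nonneg y1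
      have hstar1 : star y1 = y1 := by simp
      rw [hstar1, Matrix.sub_mulVec, dotProduct_sub, sub_nonneg] at h
      calc Vr μ (fun ω => y1 ⬝ᵥ (X ω - X1 ω))
          = y1 ⬝ᵥ (covMatrix μ (fun ω => X ω - X1 ω)).mulVec y1 :=
            (covQuad (fun i => hL2_1 i) y1).symm
        _ ≤ y1 ⬝ᵥ C1.mulVec y1 := h
    -- matrix algebra: the final combination
    have halg0 : y0 ⬝ᵥ C0.mulVec y0 = x ⬝ᵥ (Ca * C0⁻¹ * Ca).mulVec x := by
      have hcancel : C0 * (C0⁻¹ * Ca) = Ca := by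
        rw [← Matrix.mul_assoc, C0.mul_nonsing_inv (isUnit_iff_ne_zero.2 hC0.det_pos.ne'),
          Matrix.one_mul]
      calc y0 ⬝ᵥ C0.mulVec y0
          = ((C0⁻¹ * Ca).mulVec x) ⬝ᵥ ((C0 * (C0⁻¹ * Ca)).mulVec x) := by
            rw [hy0, hz, Matrix.mulVec_mulVec, Matrix.mulVec_mulVec]
        _ = x ⬝ᵥ (((C0⁻¹ * Ca)ᵀ * (C0 * (C0⁻¹ * Ca))).mulVec x) := dot_mulVec_mulVec _ _ x
        _ = x ⬝ᵥ (Ca * C0⁻¹ * Ca).mulVec x := by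
            rw [Matrix.transpose_mul, hC0iT, hCaT, hcancel]
    have halg1 : y1 ⬝ᵥ C1.mulVec y1 = x ⬝ᵥ (Ca * C1⁻¹ * Ca).mulVec x := by
      have hcancel : C1 * (C1⁻¹ * Ca) = Ca := by
        rw [← Matrix.mul_assoc, C1.mul_nonsing_inv (isUnit_iff_ne_zero.2 hC1.det_pos.ne'),
          Matrix.one_mul]
      calc y1 ⬝ᵥ C1.mulVec y1
          = ((C1⁻¹ * Ca).mulVec x) ⬝ᵥ ((C1 * (C1⁻¹ * Ca)).mulVec x) := by
            rw [hy1, hz, Matrix.mulVec_mulVec, Matrix.mulVec_mulVec]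
        _ = x ⬝ᵥ (((C1⁻¹ * Ca)ᵀ * (C1 * (C1⁻¹ * Ca))).mulVec x) := dot_mulVec_mulVec _ _ x
        _ = x ⬝ᵥ (Ca * C1⁻¹ * Ca).mulVec x := by
            rw [Matrix.transpose_mul, hC1iT, hCaT, hcancel]
    have hcomb : (1 - s) • (Ca * C0⁻¹ * Ca) + s • (Ca * C1⁻¹ * Ca) = Ca := by
      have h1 : Ca * S * Ca = (1 - s) • (Ca * C0⁻¹ * Ca) + s • (Ca * C1⁻¹ * Ca) := by
        rw [hS, Matrix.mul_add, Matrix.add_mul, Matrix.mul_smul, Matrix.smul_mul,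
          Matrix.mul_smul, Matrix.smul_mul]
      rw [← h1, hCaS, Matrix.one_mul]
    have hfinal : (1 - s) * (x ⬝ᵥ (Ca * C0⁻¹ * Ca).mulVec x)
        + s * (x ⬝ᵥ (Ca * C1⁻¹ * Ca).mulVec x) = x ⬝ᵥ Ca.mulVec x := by
      conv_rhs => rw [← hcomb]
      rw [Matrix.add_mulVec, Matrix.smul_mulVec, Matrix.smul_mulVec,
        dotProduct_add, dotProduct_smul, dotProduct_smul,
        smul_eq_mul, smul_eq_mul]
    -- putting everything together
    calc x ⬝ᵥ (covMatrix μ (fun ω => X ω - Xa ω)).mulVec x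
        = Vr μ (fun ω => x ⬝ᵥ (X ω - Xa ω)) := covQuad (fun i => heA i) x
      _ = Vr μ (fun ω => (1 - s) * (y0 ⬝ᵥ (X ω - X0 ω)) + s * (y1 ⬝ᵥ (X ω - X1 ω))) := by
          rw [show (fun ω => x ⬝ᵥ (X ω - Xa ω))
            = (fun ω => (1 - s) * (y0 ⬝ᵥ (X ω - X0 ω)) + s * (y1 ⬝ᵥ (X ω - X1 ω)))
            from funext hptw]
      _ ≤ (1 - s) * Vr μ (fun ω => y0 ⬝ᵥ (X ω - X0 ω))
            + s * Vr μ (fun ω => y1 ⬝ᵥ (X ω - X1 ω)) :=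
          Vr_convex hf hg hs1' hs0 (by ring)
      _ ≤ (1 - s) * (y0 ⬝ᵥ C0.mulVec y0) + s * (y1 ⬝ᵥ C1.mulVec y1) :=
          add_le_add (mul_le_mul_of_nonneg_left hbound0 hs1')
            (mul_le_mul_of_nonneg_left hbound1 hs0)
      _ = x ⬝ᵥ Ca.mulVec x := by rw [halg0, halg1, hfinal]
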